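/- The natural symbolic coding of a minimal k-interval exchange transformation has word complexity P(n) ≤ (k−1)n + 1 for all n ≥ 1. -/

import Mathlib

open MeasureTheory Filter

/-- `T` is a `k`-interval exchange transformation of `[0, lam)` with separation points
`sep 0 = 0 < sep 1 < … < sep k = lam`: it is a bijection of `[0, lam)` which is a
translation on each subinterval `[sep i, sep (i+1))`. -/
structure IsIET (k : ℕ) (lam : ℝ) (sep : Fin (k + 1) → ℝ) (T : ℝ → ℝ) : Prop where
  sep_zero : sep 0 = 0
  sep_last : sep (Fin.last k) = lam
  sep_mono : StrictMono sep
  bijOn : Set.BijOn T (Set.Ico 0 lam) (Set.Ico 0 lam)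
  translation : ∀ i : Fin k, ∃ c : ℝ,
    ∀ x ∈ Set.Ico (sep i.castSucc) (sep i.succ), T x = x + c

/-- Minimality of an IET: every forward orbit is dense in `[0, lam)`. -/
def IETMinimal (lam : ℝ) (T : ℝ → ℝ) : Prop :=
  ∀ x ∈ Set.Ico (0 : ℝ) lam,
    Set.Ico (0 : ℝ) lam ⊆ closure {y | ∃ n : ℕ, T^[n] x = y}

/-- The word complexity of the natural symbolic coding of the IET: the number of words
`w` of length `n` over `{0, …, k-1}` that occur as the coding of the first `n` iterates
of some point. -/
noncomputable def ietComplexity (k : ℕ) (lam : ℝ) (sep : Fin (k + 1) → ℝ)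
    (T : ℝ → ℝ) (n : ℕ) : ℕ :=
  Nat.card {w : Fin n → Fin k // ∃ x ∈ Set.Ico (0 : ℝ) lam,
    ∀ t : Fin n, T^[(t : ℕ)] x ∈ Set.Ico (sep (w t).castSucc) (sep (w t).succ)}

/-- Key lemma: each cylinder set of the coding is a half-open interval `[a, b)`, and if it
is nonempty then its left endpoint `a` is either `0` or satisfies `T^[j] a = sep i` for
some `j < n` and some interior separation index `i`. -/
lemma iet_cylinder_key (k : ℕ) (lam : ℝ) (sep : Fin (k + 1) → ℝ) (T : ℝ → ℝ)
    (hT : IsIET k lam sep T) :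
    ∀ (n : ℕ) (w : Fin n → Fin k), ∃ a b : ℝ,
      {x : ℝ | x ∈ Set.Ico (0:ℝ) lam ∧
        ∀ t : Fin n, T^[(t : ℕ)] x ∈ Set.Ico (sep (w t).castSucc) (sep (w t).succ)}
        = Set.Ico a b ∧
      (a < b → a = 0 ∨ ∃ p : ℕ × Fin (k+1), p.1 < n ∧ 1 ≤ (p.2 : ℕ) ∧ (p.2 : ℕ) < k ∧
        T^[p.1] a = sep p.2) := by
  intro n
  induction n with
  | zero =>
    intro w
    refine ⟨0, lam, ?_, fun _ => Or.inl rfl⟩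
    ext x
    simp
  | succ n ih =>
    intro w
    obtain ⟨a', b', hC', hend'⟩ := ih (fun t => w t.succ)
    obtain ⟨c, hc⟩ := hT.translation (w 0)
    set i0 := w 0 with hi0
    have hsub : Set.Ico (sep i0.castSucc) (sep i0.succ) ⊆ Set.Ico (0:ℝ) lam := by
      intro x hx
      constructor
      · calc (0:ℝ) = sep 0 := hT.sep_zero.symm
          _ ≤ sep i0.castSucc := hT.sep_mono.monotone (Fin.zero_le _)
          _ ≤ x := hx.1
      · calc x < sep i0.succ := hx.2
          _ ≤ sep (Fin.last k) := hT.sep_mono.monotone (Fin.le_last _)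
          _ = lam := hT.sep_last
    have hiff : ∀ x : ℝ, (x ∈ Set.Ico (0:ℝ) lam ∧
        ∀ t : Fin (n+1), T^[(t:ℕ)] x ∈ Set.Ico (sep (w t).castSucc) (sep (w t).succ)) ↔
        (x ∈ Set.Ico (sep i0.castSucc) (sep i0.succ) ∧ x + c ∈ Set.Ico a' b') := by
      intro x
      constructor
      · rintro ⟨hx, ht⟩
        have h0 := ht 0
        simp only [Fin.val_zero, Function.iterate_zero, id] at h0
        refine ⟨h0, ?_⟩
        have hTx : T x = x + c := hc x h0
        rw [← hC', ← hTx]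
        refine ⟨hT.bijOn.mapsTo hx, fun t => ?_⟩
        have h1 := ht t.succ
        rwa [Fin.val_succ, Function.iterate_succ_apply] at h1
      · rintro ⟨hx, hx'⟩
        have hTx : T x = x + c := hc x hx
        rw [← hC'] at hx'
        simp only [Set.mem_setOf_eq] at hx'
        refine ⟨hsub hx, fun t => ?_⟩
        refine Fin.cases ?_ ?_ t
        · simpa using hx
        · intro s
          have h1 := hx'.2 s
          rw [Fin.val_succ, Function.iterate_succ_apply, hTx]
          exact h1
    have hset : {x : ℝ | x ∈ Set.Ico (0:ℝ) lam ∧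
        ∀ t : Fin (n+1), T^[(t:ℕ)] x ∈ Set.Ico (sep (w t).castSucc) (sep (w t).succ)}
        = Set.Ico (max (sep i0.castSucc) (a' - c)) (min (sep i0.succ) (b' - c)) := by
      ext x
      rw [Set.mem_setOf_eq, hiff]
      simp only [Set.mem_Ico, max_le_iff, lt_min_iff]
      constructor
      · rintro ⟨⟨h1, h2⟩, ⟨h3, h4⟩⟩
        exact ⟨⟨h1, by linarith⟩, h2, by linarith⟩
      · rintro ⟨⟨h1, h3⟩, h2, h4⟩
        exact ⟨⟨h1, h2⟩, by linarith, by linarith⟩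
    refine ⟨_, _, hset, ?_⟩
    intro hab
    set a := max (sep i0.castSucc) (a' - c) with hadef
    have haC : a ∈ Set.Ico a (min (sep i0.succ) (b' - c)) := ⟨le_rfl, hab⟩
    rw [← hset, Set.mem_setOf_eq, hiff] at haC
    obtain ⟨haI, haC'⟩ := haC
    by_cases h0 : a = sep i0.castSucc
    · by_cases hz : i0.castSucc = 0
      · left
        rw [h0, hz, hT.sep_zero]
      · right
        refine ⟨(0, i0.castSucc), n.succ_pos, ?_, ?_, ?_⟩
        · show 1 ≤ (i0.castSucc : ℕ)
          have hne : (i0.castSucc : ℕ) ≠ 0 := by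
            intro hcon
            exact hz (Fin.ext (by simpa using hcon))
          omega
        · show (i0.castSucc : ℕ) < k
          simpa using i0.isLt
        · show T^[0] a = sep i0.castSucc
          simpa using h0
    · have ha'c : a = a' - c := (max_choice _ _).resolve_left h0
      have hTa : T a = a' := by rw [hc a haI, ha'c]; ring
      have hnon' : a' < b' := lt_of_le_of_lt haC'.1 haC'.2
      rcases hend' hnon' with h00 | ⟨p, hp1, hp2, hp3, hp4⟩
      · exfalso
        have hsepI : sep i0.castSucc ∈ Set.Ico (sep i0.castSucc) (sep i0.succ) :=
          ⟨le_rfl, hT.sep_mono (Fin.castSucc_lt_succ (i := i0))⟩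
        have h1 : (0:ℝ) ≤ sep i0.castSucc + c := by
          have h2 := (hT.bijOn.mapsTo (hsub hsepI)).1
          rwa [hc _ hsepI] at h2
        have h2 : sep i0.castSucc ≤ a := le_max_left _ _
        have h3 : a ≤ sep i0.castSucc := by rw [ha'c, h00]; linarith
        exact h0 (le_antisymm h3 h2)
      · right
        exact ⟨(p.1 + 1, p.2), by omega, hp2, hp3, by
          rw [Function.iterate_succ_apply, hTa]; exact hp4⟩

/-- The natural coding of a minimal `k`-IET has complexity `P(n) ≤ (k-1)n + 1`. -/
theorem iet_complexity_le (k : ℕ) (lam : ℝ) (sep : Fin (k + 1) → ℝ) (T : ℝ → ℝ)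
    (hT : IsIET k lam sep T) (hmin : IETMinimal lam T) (n : ℕ) (hn : 1 ≤ n) :
    ietComplexity k lam sep T n ≤ (k - 1) * n + 1 := by
  classical
  choose a b hC hend using iet_cylinder_key k lam sep T hT n
  unfold ietComplexity
  set Sub := {w : Fin n → Fin k // ∃ x ∈ Set.Ico (0 : ℝ) lam,
    ∀ t : Fin n, T^[(t : ℕ)] x ∈ Set.Ico (sep (w t).castSucc) (sep (w t).succ)} with hSub
  have hmem : ∀ w : Sub, a w.1 < b w.1 ∧ a w.1 ∈ Set.Ico (0:ℝ) lam ∧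
      ∀ t : Fin n, T^[(t:ℕ)] (a w.1) ∈ Set.Ico (sep (w.1 t).castSucc) (sep (w.1 t).succ) := by
    rintro ⟨w, x, hx1, hx2⟩
    have hxmem : x ∈ Set.Ico (a w) (b w) := by
      rw [← hC w]; exact ⟨hx1, hx2⟩
    have hab : a w < b w := lt_of_le_of_lt hxmem.1 hxmem.2
    have hamem : a w ∈ Set.Ico (a w) (b w) := ⟨le_rfl, hab⟩
    rw [← hC w, Set.mem_setOf_eq] at hamem
    exact ⟨hab, hamem.1, hamem.2⟩
  have hletter : ∀ (z : ℝ) (i j : Fin k), z ∈ Set.Ico (sep i.castSucc) (sep i.succ) →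
      z ∈ Set.Ico (sep j.castSucc) (sep j.succ) → i = j := by
    intro z i j hi hj
    have h1 := hT.sep_mono.lt_iff_lt.mp (lt_of_le_of_lt hi.1 hj.2)
    have h2 := hT.sep_mono.lt_iff_lt.mp (lt_of_le_of_lt hj.1 hi.2)
    rw [Fin.lt_def] at h1 h2
    simp only [Fin.coe_castSucc, Fin.val_succ] at h1 h2
    exact Fin.ext (by omega)
  have haInj : ∀ w w' : Sub, a w.1 = a w'.1 → w = w' := by
    intro w w' hEq
    have h1 := (hmem w).2.2
    have h2 := (hmem w').2.2
    apply Subtype.ext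
    funext t
    exact hletter _ _ _ (h1 t) (by rw [hEq]; exact h2 t)
  have main : Nat.card Sub ≤ Nat.card (Option (Fin n × Fin (k-1))) := by
    apply Nat.card_le_card_of_injective
      (fun w : Sub => if h : a w.1 = 0 then (none : Option (Fin n × Fin (k-1))) else
        some (⟨((hend w.1 (hmem w).1).resolve_left h).choose.1,
                ((hend w.1 (hmem w).1).resolve_left h).choose_spec.1⟩,
              ⟨(((hend w.1 (hmem w).1).resolve_left h).choose.2 : ℕ) - 1, by
                have h2 := ((hend w.1 (hmem w).1).resolve_left h).choose_spec.2.1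
                have h3 := ((hend w.1 (hmem w).1).resolve_left h).choose_spec.2.2.1
                omega⟩))
    intro w w' hww
    simp only at hww
    by_cases h : a w.1 = 0 <;> by_cases h' : a w'.1 = 0
    · exact haInj w w' (h.trans h'.symm)
    · rw [dif_pos h, dif_neg h'] at hww
      exact absurd hww (by simp)
    · rw [dif_neg h, dif_pos h'] at hww
      exact absurd hww (by simp)
    · rw [dif_neg h, dif_neg h'] at hww
      simp only [Option.some.injEq, Prod.mk.injEq, Fin.mk.injEq] at hww
      set E := (hend w.1 (hmem w).1).resolve_left h with hE
      set E' := (hend w'.1 (hmem w').1).resolve_left h' with hE'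
      have hjs : E.choose.1 = E'.choose.1 := hww.1
      have hvs : (E.choose.2 : ℕ) = (E'.choose.2 : ℕ) := by
        have hv := hww.2
        have h2 := E.choose_spec.2.1
        have h2' := E'.choose_spec.2.1
        omega
      have hi2 : E.choose.2 = E'.choose.2 := Fin.ext hvs
      have hTeq : T^[E.choose.1] (a w.1) = T^[E.choose.1] (a w'.1) := by
        rw [E.choose_spec.2.2.2, hjs, E'.choose_spec.2.2.2, hi2]
      apply haInj
      exact (hT.bijOn.iterate E.choose.1).injOn (hmem w).2.1 (hmem w').2.1 hTeq
  have hcard : Nat.card (Option (Fin n × Fin (k-1))) = (k-1) * n + 1 := by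
    simp [Nat.card_eq_fintype_card, Nat.mul_comm]
  calc Nat.card Sub ≤ Nat.card (Option (Fin n × Fin (k-1))) := main
    _ = (k-1) * n + 1 := hcard
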